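/- Let S be a maximal embedding dimension numerical semigroup with S ≠ ℕ. Then S is a Coe-semigroup if and only if m(S) is even and T = {s - m(S) : s ∈ S \ {0}} is a Coe-semigroup. -/

import Mathlib

open Pointwise

/-- A numerical semigroup: a submonoid of (ℕ,+) with finite complement. -/
def IsNumSgrp (S : Set ℕ) : Prop :=
  0 ∈ S ∧ (∀ a b, a ∈ S → b ∈ S → a + b ∈ S) ∧ {x : ℕ | x ∉ S}.Finite

/-- A Coe-semigroup: a numerical semigroup containing x-1 and x+1 for each odd x ∈ S. -/
def IsCoe (S : Set ℕ) : Prop :=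
  IsNumSgrp S ∧ ∀ x ∈ S, Odd x → x - 1 ∈ S ∧ x + 1 ∈ S

/-- The Frobenius number: the largest natural number not in S (for S ≠ ℕ). -/
noncomputable def frob (S : Set ℕ) : ℕ := sSup {x : ℕ | x ∉ S}

/-- The multiplicity: the least nonzero element of S. -/
noncomputable def mult (S : Set ℕ) : ℕ := sInf {x : ℕ | x ∈ S ∧ x ≠ 0}

/-- The genus: the number of gaps of S. -/
noncomputable def genus (S : Set ℕ) : ℕ := {x : ℕ | x ∉ S}.ncard

/-- The minimal system of generators of a numerical semigroup:
nonzero elements that are not a sum of two nonzero elements. -/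
def msg (S : Set ℕ) : Set ℕ :=
  (S \ {0}) \ {x | ∃ a ∈ S \ {0}, ∃ b ∈ S \ {0}, x = a + b}

section
variable {S : Set ℕ}

lemma numsgrp_large (hS : IsNumSgrp S) : ∃ N, ∀ n, N ≤ n → n ∈ S := by
  classical
  refine ⟨hS.2.2.toFinset.sup id + 1, fun n hn => ?_⟩
  by_contra h
  have hmem : n ∈ hS.2.2.toFinset := by simpa using h
  have := Finset.le_sup (f := id) hmem
  simp only [id] at this
  omega

lemma mult_spec (hS : IsNumSgrp S) : mult S ∈ S ∧ mult S ≠ 0 := by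
  obtain ⟨N, hN⟩ := numsgrp_large hS
  have hne : {x : ℕ | x ∈ S ∧ x ≠ 0}.Nonempty := ⟨N + 1, hN _ (by omega), by omega⟩
  exact Nat.sInf_mem hne

lemma mult_le {s : ℕ} (hs : s ∈ S) (h0 : s ≠ 0) : mult S ≤ s :=
  Nat.sInf_le ⟨hs, h0⟩

lemma mult_two_le (hS : IsNumSgrp S) (hne : S ≠ Set.univ) : 2 ≤ mult S := by
  obtain ⟨hm, h0⟩ := mult_spec hS
  by_contra h
  have h1 : mult S = 1 := by omega
  apply hne
  rw [Set.eq_univ_iff_forall]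
  intro n
  induction n with
  | zero => exact hS.1
  | succ k ih => exact hS.2.1 k 1 ih (h1 ▸ hm)

lemma mul_mult_mem (hS : IsNumSgrp S) : ∀ k, mult S * k ∈ S := by
  intro k
  induction k with
  | zero => simpa using hS.1
  | succ n ih =>
    have := hS.2.1 _ _ ih (mult_spec hS).1
    simpa [Nat.mul_succ] using this

/-- the nonzero Apéry set -/
def Ap' (S : Set ℕ) : Set ℕ := {s | s ∈ S ∧ s ≠ 0 ∧ s - mult S ∉ S}

lemma ap'_eq (hS : IsNumSgrp S) :
    Ap' S = (fun r => sInf {s | s ∈ S ∧ s % mult S = r}) '' Set.Ico 1 (mult S) := by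
  set m := mult S with hmdef
  obtain ⟨hmS, hm0⟩ := mult_spec hS
  obtain ⟨N, hN⟩ := numsgrp_large hS
  ext s
  constructor
  · rintro ⟨hs, hs0, hsm⟩
    have hms : m ≤ s := mult_le hs hs0
    have hr0 : s % m ≠ 0 := by
      intro h
      obtain ⟨k, hk⟩ := Nat.dvd_of_mod_eq_zero h
      have hk1 : 1 ≤ k := by
        rcases Nat.eq_zero_or_pos k with h0 | h1
        · subst h0; simp at hk; omega
        · omega
      obtain ⟨j, rfl⟩ : ∃ j, k = j + 1 := ⟨k - 1, by omega⟩
      apply hsm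
      have hsj : s = m * j + m := by rw [hk]; ring
      have : s - m = m * j := by omega
      rw [this]; exact mul_mult_mem hS _
    refine ⟨s % m, ⟨by omega, Nat.mod_lt _ (by omega)⟩, ?_⟩
    have hle : sInf {t | t ∈ S ∧ t % m = s % m} ≤ s := Nat.sInf_le ⟨hs, rfl⟩
    rcases eq_or_lt_of_le hle with h | h
    · exact h
    · exfalso
      obtain ⟨hg, hgr⟩ := Nat.sInf_mem (⟨s, hs, rfl⟩ : {t | t ∈ S ∧ t % m = s % m}.Nonempty)
      set g := sInf {t | t ∈ S ∧ t % m = s % m}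
      have hdvd : m ∣ (s - g) :=
        Nat.dvd_of_mod_eq_zero (Nat.sub_mod_eq_zero_of_mod_eq hgr.symm)
      obtain ⟨j, hj⟩ := hdvd
      have hj1 : 1 ≤ j := by
        rcases Nat.eq_zero_or_pos j with h0 | h1
        · subst h0; simp at hj; omega
        · omega
      obtain ⟨i, rfl⟩ : ∃ i, j = i + 1 := ⟨j - 1, by omega⟩
      apply hsm
      have hji : s - g = m * i + m := by rw [hj]; ring
      have hmis : s - m = g + m * i := by omega
      rw [hmis]
      exact hS.2.1 _ _ hg (mul_mult_mem hS i)
  · rintro ⟨r, ⟨hr1, hrm⟩, rfl⟩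
    have hne : {t | t ∈ S ∧ t % m = r}.Nonempty := by
      refine ⟨r + m * N, hN _ (by nlinarith), ?_⟩
      simp [Nat.add_mul_mod_self_left, Nat.mod_eq_of_lt hrm]
    obtain ⟨hg, hgr⟩ := Nat.sInf_mem hne
    set g := sInf {t | t ∈ S ∧ t % m = r} with hgdef
    have hg0 : g ≠ 0 := by
      rintro h0
      rw [h0] at hgr
      simp at hgr
      omega
    refine ⟨hg, hg0, ?_⟩
    intro hcon
    have hmg : m ≤ g := mult_le hg hg0
    have hmod : (g - m) % m = r := by
      have h1 : g - m + m = g := Nat.sub_add_cancel hmg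
      calc (g - m) % m = (g - m + m) % m := (Nat.add_mod_right _ _).symm
        _ = g % m := by rw [h1]
        _ = r := hgr
    have : sInf {t | t ∈ S ∧ t % m = r} ≤ g - m := Nat.sInf_le ⟨hcon, hmod⟩
    omega

end

lemma ap'_ncard (hS : IsNumSgrp S) : (Ap' S).ncard = mult S - 1 := by
  set m := mult S with hmdef
  obtain ⟨N, hN⟩ := numsgrp_large hS
  have hmod : ∀ r ∈ Set.Ico 1 m, (sInf {s | s ∈ S ∧ s % m = r}) % m = r := by
    rintro r ⟨hr1, hrm⟩
    have hne : {t | t ∈ S ∧ t % m = r}.Nonempty := by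
      refine ⟨r + m * N, hN _ (by nlinarith), ?_⟩
      simp [Nat.add_mul_mod_self_left, Nat.mod_eq_of_lt hrm]
    exact (Nat.sInf_mem hne).2
  rw [ap'_eq hS, Set.ncard_image_of_injOn]
  · rw [← Finset.coe_Ico, Set.ncard_coe_finset, Nat.card_Ico]
  · intro r1 h1 r2 h2 heq
    have heq' : sInf {s | s ∈ S ∧ s % m = r1} = sInf {s | s ∈ S ∧ s % m = r2} := heq
    have := hmod r1 h1
    rw [heq', hmod r2 h2] at this
    exact this.symm

lemma ap'_finite (hS : IsNumSgrp S) : (Ap' S).Finite := by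
  rw [ap'_eq hS]
  exact (Set.finite_Ico _ _).image _

lemma med_key (hS : IsNumSgrp S) (hne : S ≠ Set.univ)
    (hmed : (msg S).ncard = mult S) :
    ∀ s ∈ S, s ≠ 0 → ∀ t ∈ S, t ≠ 0 → s + t - mult S ∈ S := by
  set m := mult S with hmdef
  obtain ⟨hmS, hm0⟩ := mult_spec hS
  have hm2 : 2 ≤ m := mult_two_le hS hne
  have hmmsg : m ∈ msg S := by
    refine ⟨⟨hmS, by simpa using hm0⟩, ?_⟩
    rintro ⟨a, ⟨ha, ha0⟩, b, ⟨hb, hb0⟩, hab⟩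
    simp only [Set.mem_singleton_iff] at ha0 hb0
    have := mult_le ha ha0
    have := mult_le hb hb0
    omega
  have hsub : msg S \ {m} ⊆ Ap' S := by
    rintro x ⟨⟨⟨hx, hx0⟩, hxn⟩, hxm⟩
    simp only [Set.mem_singleton_iff] at hx0 hxm
    refine ⟨hx, hx0, ?_⟩
    intro hcon
    have hmx : m ≤ x := mult_le hx hx0
    exact hxn ⟨m, ⟨hmS, by simpa using hm0⟩, x - m, ⟨hcon, by simp; omega⟩, by omega⟩
  have hfin : (msg S).Finite := by
    by_contra h
    rw [Set.Infinite.ncard h] at hmed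
    omega
  have hcard : (msg S \ {m}).ncard = m - 1 := by
    rw [Set.ncard_diff_singleton_of_mem hmmsg, hmed]
  have heq : msg S \ {m} = Ap' S := by
    apply Set.eq_of_subset_of_ncard_le hsub _ (ap'_finite hS)
    rw [hcard, ap'_ncard hS]
  intro s hs hs0 t ht ht0
  have hu : s + t ∈ S := hS.2.1 _ _ hs ht
  by_contra hcon
  have : s + t ∈ Ap' S := ⟨hu, by omega, hcon⟩
  rw [← heq] at this
  exact this.1.2 ⟨s, ⟨hs, by simpa using hs0⟩, t, ⟨ht, by simpa using ht0⟩, rfl⟩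


theorem stmt_15' (S : Set ℕ) (hS : IsNumSgrp S) (hne : S ≠ Set.univ)
    (hmed : (msg S).ncard = mult S) :
    (IsNumSgrp S ∧ ∀ x ∈ S, Odd x → x - 1 ∈ S ∧ x + 1 ∈ S) ↔
      (Even (mult S) ∧ IsNumSgrp {t : ℕ | ∃ s ∈ S, s ≠ 0 ∧ t = s - mult S} ∧
        ∀ x ∈ {t : ℕ | ∃ s ∈ S, s ≠ 0 ∧ t = s - mult S}, Odd x →
          x - 1 ∈ {t : ℕ | ∃ s ∈ S, s ≠ 0 ∧ t = s - mult S} ∧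
          x + 1 ∈ {t : ℕ | ∃ s ∈ S, s ≠ 0 ∧ t = s - mult S}) := by
  set m := mult S with hmdef
  set T : Set ℕ := {t : ℕ | ∃ s ∈ S, s ≠ 0 ∧ t = s - m} with hTdef
  obtain ⟨hmS, hm0⟩ := mult_spec hS
  have hm2 : 2 ≤ m := mult_two_le hS hne
  have hT : ∀ t, t ∈ T ↔ t + m ∈ S := by
    intro t
    constructor
    · rintro ⟨s, hs, hs0, rfl⟩
      have := mult_le hs hs0
      have : s - m + m = s := by omega
      rw [this]; exact hs
    · intro h
      exact ⟨t + m, h, by omega, by omega⟩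
  constructor
  · rintro ⟨-, hcoe⟩
    have hmeven : Even m := by
      by_contra hodd
      rw [Nat.not_even_iff_odd] at hodd
      obtain ⟨h1, -⟩ := hcoe m hmS hodd
      have := mult_le h1 (by omega)
      omega
    refine ⟨hmeven, ⟨(hT 0).mpr (by simpa using hmS), ?_, ?_⟩, ?_⟩
    · intro a b ha hb
      rw [hT] at ha hb ⊢
      have := med_key hS hne hmed _ ha (by omega) _ hb (by omega)
      have heq : a + m + (b + m) - m = a + b + m := by omega
      rwa [heq] at this
    · have hsub : {x : ℕ | x ∉ T} ⊆ (fun x => x + m) ⁻¹' {x : ℕ | x ∉ S} := by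
        intro x hx
        simp only [Set.mem_preimage, Set.mem_setOf_eq]
        intro hc
        exact hx ((hT x).mpr hc)
      exact (hS.2.2.preimage ((add_left_injective m).injOn)).subset hsub
    · intro x hx hodd
      rw [hT] at hx
      have hxodd : Odd (x + m) := by
        rw [Nat.odd_iff] at hodd ⊢
        rw [Nat.even_iff] at hmeven
        omega
      obtain ⟨h1, h2⟩ := hcoe _ hx hxodd
      have hx1 : 1 ≤ x := by rw [Nat.odd_iff] at hodd; omega
      constructor
      · rw [hT]
        have : x - 1 + m = x + m - 1 := by omega
        rwa [this]
      · rw [hT]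
        have : x + 1 + m = x + m + 1 := by omega
        rwa [this]
  · rintro ⟨hmeven, -, hcoeT⟩
    refine ⟨hS, ?_⟩
    intro x hx hodd
    have hx0 : x ≠ 0 := by rw [Nat.odd_iff] at hodd; omega
    have hmx : m ≤ x := mult_le hx hx0
    have hxm : x ≠ m := by
      rintro rfl
      rw [Nat.odd_iff] at hodd; rw [Nat.even_iff] at hmeven; omega
    have htT : x - m ∈ T := (hT _).mpr (by rwa [Nat.sub_add_cancel hmx])
    have htodd : Odd (x - m) := by
      rw [Nat.odd_iff] at hodd ⊢
      rw [Nat.even_iff] at hmeven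
      omega
    obtain ⟨h1, h2⟩ := hcoeT _ htT htodd
    have ht1 : 1 ≤ x - m := by rw [Nat.odd_iff] at htodd; omega
    rw [hT] at h1 h2
    constructor
    · have : x - m - 1 + m = x - 1 := by omega
      rwa [this] at h1
    · have : x - m + 1 + m = x + 1 := by omega
      rwa [this] at h2


theorem stmt_15 (S : Set ℕ) (hS : IsNumSgrp S) (hne : S ≠ Set.univ)
    (hmed : (msg S).ncard = mult S) :
    IsCoe S ↔ (Even (mult S) ∧ IsCoe {t : ℕ | ∃ s ∈ S, s ≠ 0 ∧ t = s - mult S}) := by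
  constructor
  · intro h
    have := (stmt_15' S hS hne hmed).mp ⟨h.1, h.2⟩
    exact ⟨this.1, this.2.1, this.2.2⟩
  · rintro ⟨h1, h2, h3⟩
    exact (stmt_15' S hS hne hmed).mpr ⟨h1, h2, h3⟩
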